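/- Let s ∈ [−1,1]^n with s ≠ 0, let 0 < ε < 1/2, and let q ∈ ℝ^n satisfy ‖q − (I + L)^{−1} s‖_{I+L} ≤ δ·‖(I + L)^{−1} s‖_{I+L} for some δ with 0 < δ ≤ ε/(3·√(2n)). Then (1 − ε)·‖(I + L)^{−1} s‖₂² ≤ ‖q‖₂² ≤ (1 + ε)·‖(I + L)^{−1} s‖₂². -/

import Mathlib

open Matrix

/-- The norm of a vector `x` with respect to a matrix `K`: `‖x‖_K = √(xᵀ K x)`. -/
noncomputable def matNorm {m : Type*} [Fintype m] (K : Matrix m m ℝ) (x : m → ℝ) : ℝ :=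
  Real.sqrt (x ⬝ᵥ K *ᵥ x)

lemma lap_quad {n : ℕ} (A : Matrix (Fin n) (Fin n) ℝ)
    (hAsymm : A.IsSymm)
    (hAval : ∀ i j, A i j = -1 ∨ A i j = 0 ∨ A i j = 1)
    (x : Fin n → ℝ) :
    x ⬝ᵥ ((Matrix.diagonal fun i => ∑ j, |A i j|) - A) *ᵥ x
      = (1/2) * ∑ i, ∑ j, (A i j * x i - (A i j)^2 * x j)^2 := by
  have key : ∀ i j, (A i j * x i - (A i j)^2 * x j)^2
      = |A i j| * x i ^ 2 + |A i j| * x j ^ 2 - 2 * (A i j * (x i * x j)) := by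
    intro i j
    rcases hAval i j with h | h | h <;> rw [h] <;> norm_num <;> try ring
  have hswap : ∑ i, ∑ j, |A i j| * x j ^ 2 = ∑ i, ∑ j, |A i j| * x i ^ 2 := by
    rw [Finset.sum_comm]
    refine Finset.sum_congr rfl fun i _ => Finset.sum_congr rfl fun j _ => ?_
    rw [hAsymm.apply i j]
  have hsum : ∑ i, ∑ j, (A i j * x i - (A i j)^2 * x j)^2
      = 2 * ((∑ i, (∑ j, |A i j|) * x i ^ 2) - ∑ i, ∑ j, A i j * (x i * x j)) := by
    calc ∑ i, ∑ j, (A i j * x i - (A i j)^2 * x j)^2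
        = ∑ i, ∑ j, (|A i j| * x i ^ 2 + |A i j| * x j ^ 2 - 2 * (A i j * (x i * x j))) :=
          Finset.sum_congr rfl fun i _ => Finset.sum_congr rfl fun j _ => key i j
      _ = (∑ i, ∑ j, |A i j| * x i ^ 2) + (∑ i, ∑ j, |A i j| * x j ^ 2)
          - 2 * ∑ i, ∑ j, A i j * (x i * x j) := by
          simp only [Finset.sum_sub_distrib, Finset.sum_add_distrib, Finset.mul_sum]
      _ = 2 * ((∑ i, (∑ j, |A i j|) * x i ^ 2) - ∑ i, ∑ j, A i j * (x i * x j)) := by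
          rw [hswap]
          simp only [Finset.sum_mul]
          ring
  have hDpart : x ⬝ᵥ (Matrix.diagonal fun i => ∑ j, |A i j|) *ᵥ x
      = ∑ i, (∑ j, |A i j|) * x i ^ 2 := by
    simp only [dotProduct, Matrix.mulVec_diagonal]
    refine Finset.sum_congr rfl fun i _ => ?_; ring
  have hApart : x ⬝ᵥ A *ᵥ x = ∑ i, ∑ j, A i j * (x i * x j) := by
    simp only [dotProduct, Matrix.mulVec, Finset.mul_sum]
    refine Finset.sum_congr rfl fun i _ => Finset.sum_congr rfl fun j _ => ?_
    ring
  rw [Matrix.sub_mulVec, dotProduct_sub, hDpart, hApart, hsum]; ring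

lemma lap_quad_le {n : ℕ} (A : Matrix (Fin n) (Fin n) ℝ)
    (hAdiag : ∀ i, A i i = 0)
    (hAval : ∀ i j, A i j = -1 ∨ A i j = 0 ∨ A i j = 1)
    (x : Fin n → ℝ) :
    ∑ i, ∑ j, (A i j * x i - (A i j)^2 * x j)^2
      ≤ (4*(n:ℝ) - 4) * ∑ i, x i ^ 2 := by
  have hb : ∀ i j, (A i j * x i - (A i j)^2 * x j)^2
      ≤ if i = j then 0 else 2 * x i ^ 2 + 2 * x j ^ 2 := by
    intro i j
    by_cases h : i = j
    · subst h; simp [hAdiag i]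
    · rw [if_neg h]
      rcases hAval i j with ha | ha | ha <;> rw [ha] <;>
        nlinarith [sq_nonneg (x i + x j), sq_nonneg (x i - x j)]
  calc ∑ i, ∑ j, (A i j * x i - (A i j)^2 * x j)^2
      ≤ ∑ i, ∑ j, (if i = j then (0:ℝ) else 2 * x i ^ 2 + 2 * x j ^ 2) :=
        Finset.sum_le_sum fun i _ => Finset.sum_le_sum fun j _ => hb i j
    _ = (4*(n:ℝ) - 4) * ∑ i, x i ^ 2 := by
        have hrow : ∀ i : Fin n, ∑ j, (if i = j then (0:ℝ) else 2 * x i ^ 2 + 2 * x j ^ 2)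
            = (2*(n:ℝ) - 4) * x i ^ 2 + 2 * ∑ k, x k ^ 2 := by
          intro i
          have h1 : ∀ j : Fin n, (if i = j then (0:ℝ) else 2 * x i ^ 2 + 2 * x j ^ 2)
              = (2 * x i ^ 2 + 2 * x j ^ 2)
                - (if i = j then 2 * x i ^ 2 + 2 * x j ^ 2 else 0) := by
            intro j; by_cases h : i = j <;> simp [h]
          simp only [h1]
          rw [Finset.sum_sub_distrib, Finset.sum_add_distrib, Finset.sum_const,
            Finset.sum_ite_eq, if_pos (Finset.mem_univ i)]
          simp only [Finset.card_univ, Fintype.card_fin, nsmul_eq_mul, ← Finset.mul_sum]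
          ring
        rw [Finset.sum_congr rfl fun i _ => hrow i, Finset.sum_add_distrib,
          Finset.sum_const, ← Finset.mul_sum]
        simp only [Finset.card_univ, Fintype.card_fin, nsmul_eq_mul]
        ring

lemma scalar_final (ε X E P : ℝ) (hX0 : 0 ≤ X) (hE0 : 0 ≤ E)
    (hε : 0 < ε) (hε' : ε < 1 / 2)
    (hEb : E ≤ (ε/3)^2 * X) (hPu : P ≤ (ε/3) * X) (hPl : -((ε/3) * X) ≤ P) :
    (1 - ε) * X ≤ X + 2 * P + E ∧ X + 2 * P + E ≤ (1 + ε) * X := by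
  have hεX : 0 ≤ ε * X := mul_nonneg hε.le hX0
  have h3 : ε^2 * X ≤ 3 * (ε * X) := by
    nlinarith [mul_nonneg (mul_nonneg hε.le hX0) (show (0:ℝ) ≤ 3 - ε by linarith)]
  constructor
  · nlinarith
  · nlinarith

theorem stmt_13 (n : ℕ) (hn : 1 ≤ n) (A : Matrix (Fin n) (Fin n) ℝ)
    (hAsymm : A.IsSymm) (hAdiag : ∀ i, A i i = 0)
    (hAval : ∀ i j, A i j = -1 ∨ A i j = 0 ∨ A i j = 1)
    (D L : Matrix (Fin n) (Fin n) ℝ)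
    (hD : D = Matrix.diagonal fun i => ∑ j, |A i j|)
    (hL : L = D - A)
    (s : Fin n → ℝ) (hs : ∀ i, s i ∈ Set.Icc (-1 : ℝ) 1) (hs0 : s ≠ 0)
    (ε : ℝ) (hε : 0 < ε) (hε' : ε < 1 / 2)
    (δ : ℝ) (hδ : 0 < δ) (hδ' : δ ≤ ε / (3 * Real.sqrt (2 * n)))
    (q : Fin n → ℝ)
    (hq : matNorm (1 + L) (q - (1 + L)⁻¹ *ᵥ s) ≤
      δ * matNorm (1 + L) ((1 + L)⁻¹ *ᵥ s)) :
    (1 - ε) * ∑ i, (((1 + L)⁻¹ *ᵥ s) i) ^ 2 ≤ ∑ i, q i ^ 2 ∧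
    ∑ i, q i ^ 2 ≤ (1 + ε) * ∑ i, (((1 + L)⁻¹ *ᵥ s) i) ^ 2 := by
  set x : Fin n → ℝ := (1 + L)⁻¹ *ᵥ s with hxdef
  set e : Fin n → ℝ := q - x with hedef
  -- quadratic form facts
  have hLq : ∀ y : Fin n → ℝ, y ⬝ᵥ L *ᵥ y
      = (1/2) * ∑ i, ∑ j, (A i j * y i - (A i j)^2 * y j)^2 := by
    intro y; rw [hL, hD]; exact lap_quad A hAsymm hAval y
  have hL0 : ∀ y : Fin n → ℝ, 0 ≤ y ⬝ᵥ L *ᵥ y := by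
    intro y; rw [hLq y]; positivity
  have hLup : ∀ y : Fin n → ℝ, y ⬝ᵥ L *ᵥ y ≤ (2*(n:ℝ) - 2) * ∑ i, y i ^ 2 := by
    intro y; rw [hLq y]
    have := lap_quad_le A hAdiag hAval y
    linarith
  have hM : ∀ y : Fin n → ℝ, y ⬝ᵥ (1 + L) *ᵥ y = (∑ i, y i ^ 2) + y ⬝ᵥ L *ᵥ y := by
    intro y
    rw [Matrix.add_mulVec, dotProduct_add, Matrix.one_mulVec]
    congr 1
    simp [dotProduct, sq]
  have hy2 : ∀ y : Fin n → ℝ, (0:ℝ) ≤ ∑ i, y i ^ 2 := fun y => by positivity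
  have hMlow : ∀ y : Fin n → ℝ, ∑ i, y i ^ 2 ≤ y ⬝ᵥ (1 + L) *ᵥ y := by
    intro y; rw [hM y]; linarith [hL0 y]
  have hMup : ∀ y : Fin n → ℝ, y ⬝ᵥ (1 + L) *ᵥ y ≤ 2*(n:ℝ) * ∑ i, y i ^ 2 := by
    intro y; rw [hM y]
    have h1 := hLup y
    have h2 := hy2 y
    nlinarith
  have hM0 : ∀ y : Fin n → ℝ, (0:ℝ) ≤ y ⬝ᵥ (1 + L) *ᵥ y :=
    fun y => le_trans (hy2 y) (hMlow y)
  -- square the hypothesis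
  have hQE : e ⬝ᵥ (1 + L) *ᵥ e ≤ δ^2 * (x ⬝ᵥ (1 + L) *ᵥ x) := by
    have h0 : (0:ℝ) ≤ Real.sqrt (e ⬝ᵥ (1 + L) *ᵥ e) := Real.sqrt_nonneg _
    have hsq := mul_self_le_mul_self h0 hq
    rw [Real.mul_self_sqrt (hM0 e)] at hsq
    calc e ⬝ᵥ (1 + L) *ᵥ e
        ≤ δ * matNorm (1 + L) x * (δ * matNorm (1 + L) x) := hsq
      _ = δ^2 * (Real.sqrt (x ⬝ᵥ (1 + L) *ᵥ x) * Real.sqrt (x ⬝ᵥ (1 + L) *ᵥ x)) := by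
          unfold matNorm; ring
      _ = δ^2 * (x ⬝ᵥ (1 + L) *ᵥ x) := by rw [Real.mul_self_sqrt (hM0 x)]
  -- the scalar bound on δ
  have hn0 : (0:ℝ) < 2 * n := by positivity
  have hsqrt : (0:ℝ) < Real.sqrt (2 * n) := Real.sqrt_pos.mpr hn0
  have hδ2 : δ^2 * (2*(n:ℝ)) ≤ (ε/3)^2 := by
    have h1 : δ * Real.sqrt (2*n) ≤ ε / 3 := by
      rw [div_mul_eq_div_div] at hδ'
      calc δ * Real.sqrt (2*n) ≤ (ε / 3 / Real.sqrt (2*n)) * Real.sqrt (2*n) := by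
            exact mul_le_mul_of_nonneg_right hδ' hsqrt.le
        _ = ε / 3 := by field_simp
    have h2 : (δ * Real.sqrt (2*n))^2 ≤ (ε/3)^2 := by
      apply sq_le_sq' _ h1
      nlinarith [mul_pos hδ hsqrt]
    calc δ^2 * (2*(n:ℝ)) = (δ * Real.sqrt (2*n))^2 := by
          rw [mul_pow, Real.sq_sqrt hn0.le]
      _ ≤ (ε/3)^2 := h2
  -- key norm bounds
  set X : ℝ := ∑ i, x i ^ 2 with hXdef
  set E : ℝ := ∑ i, e i ^ 2 with hEdef
  have hX0 : 0 ≤ X := hy2 x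
  have hE0 : 0 ≤ E := hy2 e
  have hEbound : E ≤ (ε/3)^2 * X := by
    have h1 : E ≤ δ^2 * (2*(n:ℝ) * X) :=
      le_trans (hMlow e) (le_trans hQE (mul_le_mul_of_nonneg_left (hMup x) (sq_nonneg δ)))
    calc E ≤ δ^2 * (2*(n:ℝ) * X) := h1
      _ = (δ^2 * (2*(n:ℝ))) * X := by ring
      _ ≤ (ε/3)^2 * X := mul_le_mul_of_nonneg_right hδ2 hX0
  -- Cauchy-Schwarz
  have hCS : (∑ i, e i * x i)^2 ≤ E * X :=
    Finset.sum_mul_sq_le_sq_mul_sq Finset.univ e x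
  set P : ℝ := ∑ i, e i * x i with hPdef
  have hP2 : P^2 ≤ ((ε/3) * X)^2 := by
    calc P^2 ≤ E * X := hCS
      _ ≤ ((ε/3)^2 * X) * X := mul_le_mul_of_nonneg_right hEbound hX0
      _ = ((ε/3) * X)^2 := by ring
  have hεX0 : 0 ≤ (ε/3) * X := by positivity
  have hPup : P ≤ (ε/3) * X := by nlinarith [sq_nonneg (P - (ε/3) * X)]
  have hPlow : -((ε/3) * X) ≤ P := by nlinarith [sq_nonneg (P + (ε/3) * X)]
  -- expand ∑ q i ^ 2
  have hqx : ∀ i, q i = x i + e i := by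
    intro i; simp [hedef]
  have h1 : ∑ i, q i ^ 2 = ∑ i, (x i + e i) ^ 2 :=
    Finset.sum_congr rfl fun i _ => by rw [hqx i]
  have hqsum : ∑ i, q i ^ 2 = X + 2 * P + E := by
    rw [h1, hXdef, hPdef, hEdef, Finset.mul_sum, ← Finset.sum_add_distrib,
      ← Finset.sum_add_distrib]
    exact Finset.sum_congr rfl fun i _ => by ring
  rw [hqsum]
  exact scalar_final ε X E P hX0 hE0 hε hε' hEbound hPup hPlow
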